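/- Let $0 < p < \infty$ and let $X,Y \geq 0$ be nonnegative random variables with $X$ bounded. Suppose there exist $\beta > 1$, $\delta \in (0,1)$ and $0 < \epsilon < \frac{1}{2}\beta^{-p}$ such that $\mathbb{P}(X > \beta\lambda,\ Y < \delta\lambda) \leq \epsilon\, \mathbb{P}(X \geq \lambda)$ for all $\lambda > 0$. Then $\mathbb{E}[X^p] \leq \frac{2\beta^p}{\delta^p}\, \mathbb{E}[Y^p]$. -/

import Mathlib

open MeasureTheory
open scoped ENNReal

lemma lintegral_Ioi_comp_mul_left (f : ℝ → ℝ≥0∞) {a : ℝ} (ha : 0 < a) :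
    ∫⁻ t in Set.Ioi (0:ℝ), f (a * t) = ENNReal.ofReal a⁻¹ * ∫⁻ t in Set.Ioi (0:ℝ), f t := by
  have hemb : MeasurableEmbedding (fun x : ℝ => a * x) := by
    have := (Homeomorph.mulLeft₀ a ha.ne').measurableEmbedding
    simpa [Homeomorph.coe_mulLeft₀] using this
  have hpre : (fun x : ℝ => a * x) ⁻¹' (Set.Ioi 0) = Set.Ioi 0 := by
    ext x
    simp [mul_pos_iff_of_pos_left, ha]
  calc ∫⁻ t in Set.Ioi (0:ℝ), f (a * t)
      = ∫⁻ y, f y ∂(Measure.map (fun x : ℝ => a * x)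
          ((volume : Measure ℝ).restrict (Set.Ioi 0))) := by
        rw [hemb.lintegral_map]
    _ = ∫⁻ y, f y ∂((Measure.map (fun x : ℝ => a * x)
          (volume : Measure ℝ)).restrict (Set.Ioi 0)) := by
        rw [Measure.restrict_map hemb.measurable measurableSet_Ioi, hpre]
    _ = ENNReal.ofReal a⁻¹ * ∫⁻ t in Set.Ioi (0:ℝ), f t := by
        rw [Real.map_volume_mul_left ha.ne', abs_of_pos (inv_pos.mpr ha),
          Measure.restrict_smul, lintegral_smul_measure, smul_eq_mul]

lemma tail_scale {Ω : Type*} [MeasurableSpace Ω] (ν : Measure Ω) (Z : Ω → ℝ)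
    {c q : ℝ} (hc : 0 < c) :
    ∫⁻ t in Set.Ioi (0:ℝ), ν {a | c * t ≤ Z a} * ENNReal.ofReal (t ^ q)
      = ENNReal.ofReal (c⁻¹ ^ (q + 1)) *
        ∫⁻ u in Set.Ioi (0:ℝ), ν {a | u ≤ Z a} * ENNReal.ofReal (u ^ q) := by
  have hci : (0:ℝ) < c⁻¹ := inv_pos.mpr hc
  have h1 := lintegral_Ioi_comp_mul_left
      (fun u => ν {a | u ≤ Z a} * ENNReal.ofReal ((c⁻¹ * u) ^ q)) hc
  have h2 : ∫⁻ t in Set.Ioi (0:ℝ), ν {a | c * t ≤ Z a} * ENNReal.ofReal (t ^ q)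
      = ∫⁻ t in Set.Ioi (0:ℝ), ν {a | c * t ≤ Z a} * ENNReal.ofReal ((c⁻¹ * (c * t)) ^ q) := by
    apply setLIntegral_congr_fun measurableSet_Ioi (fun t ht => ?_)
    rw [inv_mul_cancel_left₀ hc.ne']
  have h3 : ∫⁻ u in Set.Ioi (0:ℝ), ν {a | u ≤ Z a} * ENNReal.ofReal ((c⁻¹ * u) ^ q)
      = ENNReal.ofReal (c⁻¹ ^ q) *
        ∫⁻ u in Set.Ioi (0:ℝ), ν {a | u ≤ Z a} * ENNReal.ofReal (u ^ q) := by
    rw [← lintegral_const_mul' _ _ ENNReal.ofReal_ne_top]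
    apply setLIntegral_congr_fun measurableSet_Ioi (fun u hu => ?_)
    rw [Real.mul_rpow hci.le (le_of_lt hu),
      ENNReal.ofReal_mul (Real.rpow_nonneg hci.le _)]
    ring
  rw [h2, h1, h3, ← mul_assoc, ← ENNReal.ofReal_mul hci.le]
  congr 2
  rw [Real.rpow_add hci, Real.rpow_one]
  ring

/-- Burkholder's good-λ inequality: if `X` is bounded and
`P(X > βλ, Y < δλ) ≤ ε P(X ≥ λ)` for all `λ > 0` with `β > 1`, `δ ∈ (0,1)`,
`0 < ε < β^{-p}/2`, then `E[X^p] ≤ (2 β^p / δ^p) E[Y^p]`. -/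
theorem good_lambda_inequality {Ω : Type*} [MeasurableSpace Ω] (μ : Measure Ω)
    [IsProbabilityMeasure μ]
    (X Y : Ω → ℝ) (hX : Measurable X) (hY : Measurable Y)
    (hX0 : ∀ ω, 0 ≤ X ω) (hY0 : ∀ ω, 0 ≤ Y ω)
    (C : ℝ) (hXbd : ∀ ω, X ω ≤ C)
    (p : ℝ) (hp : 0 < p)
    (β δ ε : ℝ) (hβ : 1 < β) (hδ0 : 0 < δ) (hδ1 : δ < 1)
    (hε0 : 0 < ε) (hε : ε < (1 / 2) * β ^ (-p))
    (h : ∀ l : ℝ, 0 < l →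
      μ {ω | β * l < X ω ∧ Y ω < δ * l} ≤ ENNReal.ofReal ε * μ {ω | l ≤ X ω}) :
    ∫⁻ ω, ENNReal.ofReal (X ω ^ p) ∂μ ≤
      ENNReal.ofReal (2 * β ^ p / δ ^ p) * ∫⁻ ω, ENNReal.ofReal (Y ω ^ p) ∂μ := by
  have hβ0 : (0:ℝ) < β := lt_trans one_pos hβ
  set IX := ∫⁻ ω, ENNReal.ofReal (X ω ^ p) ∂μ with hIXdef
  set IY := ∫⁻ ω, ENNReal.ofReal (Y ω ^ p) ∂μ with hIYdef
  set GX := ∫⁻ t in Set.Ioi (0:ℝ), μ {a | t ≤ X a} * ENNReal.ofReal (t ^ (p - 1)) with hGXdef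
  set GY := ∫⁻ t in Set.Ioi (0:ℝ), μ {a | t ≤ Y a} * ENNReal.ofReal (t ^ (p - 1)) with hGYdef
  set AX := ∫⁻ t in Set.Ioi (0:ℝ), μ {a | t < X a} * ENNReal.ofReal (t ^ (p - 1)) with hAXdef
  have hIXle : IX = ENNReal.ofReal p * GX :=
    lintegral_rpow_eq_lintegral_meas_le_mul μ (Filter.Eventually.of_forall hX0)
      hX.aemeasurable hp
  have hIXlt : IX = ENNReal.ofReal p * AX :=
    lintegral_rpow_eq_lintegral_meas_lt_mul μ (Filter.Eventually.of_forall hX0)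
      hX.aemeasurable hp
  have hIY : IY = ENNReal.ofReal p * GY :=
    lintegral_rpow_eq_lintegral_meas_le_mul μ (Filter.Eventually.of_forall hY0)
      hY.aemeasurable hp
  -- finiteness of IX
  have hIXfin : IX ≠ ∞ := by
    have : IX ≤ ENNReal.ofReal (C ^ p) := by
      calc IX ≤ ∫⁻ _, ENNReal.ofReal (C ^ p) ∂μ :=
            lintegral_mono fun ω =>
              ENNReal.ofReal_le_ofReal (Real.rpow_le_rpow (hX0 ω) (hXbd ω) hp.le)
        _ = ENNReal.ofReal (C ^ p) := by simp
    exact (lt_of_le_of_lt this ENNReal.ofReal_lt_top).ne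
  -- measurability of tail functions
  have hmX : Measurable fun t : ℝ => μ {a | t ≤ X a} :=
    Antitone.measurable fun s t hst => measure_mono fun a ha => le_trans hst ha
  have hr : Measurable fun t : ℝ => ENNReal.ofReal (t ^ (p - 1)) := by
    measurability
  -- pointwise tail bound
  have key : ∀ t ∈ Set.Ioi (0:ℝ),
      μ {a | t < X a} * ENNReal.ofReal (t ^ (p - 1)) ≤
        (ENNReal.ofReal ε * μ {a | β⁻¹ * t ≤ X a} + μ {a | δ / β * t ≤ Y a}) *
          ENNReal.ofReal (t ^ (p - 1)) := by
    intro t ht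
    refine mul_le_mul_left ?_ _
    have hl : 0 < β⁻¹ * t := mul_pos (inv_pos.mpr hβ0) ht
    have e1 : β * (β⁻¹ * t) = t := by field_simp
    have e2 : δ * (β⁻¹ * t) = δ / β * t := by ring
    have hsub : {a | t < X a} ⊆
        {ω | β * (β⁻¹ * t) < X ω ∧ Y ω < δ * (β⁻¹ * t)} ∪ {a | δ / β * t ≤ Y a} := by
      intro a hat
      rcases lt_or_ge (Y a) (δ * (β⁻¹ * t)) with hy | hy
      · exact Or.inl ⟨by rwa [e1], hy⟩
      · exact Or.inr (by rw [← e2]; exact hy)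
    calc μ {a | t < X a}
        ≤ μ ({ω | β * (β⁻¹ * t) < X ω ∧ Y ω < δ * (β⁻¹ * t)} ∪ {a | δ / β * t ≤ Y a}) :=
          measure_mono hsub
      _ ≤ μ {ω | β * (β⁻¹ * t) < X ω ∧ Y ω < δ * (β⁻¹ * t)} + μ {a | δ / β * t ≤ Y a} :=
          measure_union_le _ _
      _ ≤ ENNReal.ofReal ε * μ {a | β⁻¹ * t ≤ X a} + μ {a | δ / β * t ≤ Y a} :=
          add_le_add_left (h (β⁻¹ * t) hl) _
  -- integrate the tail bound
  have hAXle : AX ≤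
      ENNReal.ofReal ε *
          (∫⁻ t in Set.Ioi (0:ℝ), μ {a | β⁻¹ * t ≤ X a} * ENNReal.ofReal (t ^ (p - 1))) +
        ∫⁻ t in Set.Ioi (0:ℝ), μ {a | δ / β * t ≤ Y a} * ENNReal.ofReal (t ^ (p - 1)) := by
    have step1 : AX ≤ ∫⁻ t in Set.Ioi (0:ℝ),
        (ENNReal.ofReal ε * μ {a | β⁻¹ * t ≤ X a} + μ {a | δ / β * t ≤ Y a}) *
          ENNReal.ofReal (t ^ (p - 1)) :=
      setLIntegral_mono' measurableSet_Ioi key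
    have meas1 : Measurable fun t : ℝ =>
        ENNReal.ofReal ε * (μ {a | β⁻¹ * t ≤ X a} * ENNReal.ofReal (t ^ (p - 1))) :=
      ((hmX.comp (measurable_id.const_mul β⁻¹)).mul hr).const_mul _
    calc AX ≤ _ := step1
      _ = ∫⁻ t in Set.Ioi (0:ℝ),
            (ENNReal.ofReal ε * (μ {a | β⁻¹ * t ≤ X a} * ENNReal.ofReal (t ^ (p - 1))) +
              μ {a | δ / β * t ≤ Y a} * ENNReal.ofReal (t ^ (p - 1))) := by
          apply lintegral_congr fun t => by ring
      _ = _ := by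
          rw [lintegral_add_left meas1, lintegral_const_mul' _ _ ENNReal.ofReal_ne_top]
  -- change of variables
  have hS1 : ∫⁻ t in Set.Ioi (0:ℝ), μ {a | β⁻¹ * t ≤ X a} * ENNReal.ofReal (t ^ (p - 1))
      = ENNReal.ofReal (β ^ p) * GX := by
    have := tail_scale μ X (q := p - 1) (inv_pos.mpr hβ0)
    rw [inv_inv, sub_add_cancel] at this
    exact this
  have hS2 : ∫⁻ t in Set.Ioi (0:ℝ), μ {a | δ / β * t ≤ Y a} * ENNReal.ofReal (t ^ (p - 1))
      = ENNReal.ofReal ((β / δ) ^ p) * GY := by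
    have := tail_scale μ Y (q := p - 1) (div_pos hδ0 hβ0)
    rw [inv_div, sub_add_cancel] at this
    exact this
  -- main inequality
  have main : IX ≤ ENNReal.ofReal (ε * β ^ p) * IX + ENNReal.ofReal ((β / δ) ^ p) * IY := by
    calc IX = ENNReal.ofReal p * AX := hIXlt
      _ ≤ ENNReal.ofReal p *
            (ENNReal.ofReal ε * (ENNReal.ofReal (β ^ p) * GX) +
              ENNReal.ofReal ((β / δ) ^ p) * GY) := by
          apply mul_le_mul_right
          calc AX ≤ _ := hAXle
            _ = _ := by rw [hS1, hS2]
      _ = ENNReal.ofReal (ε * β ^ p) * (ENNReal.ofReal p * GX) +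
            ENNReal.ofReal ((β / δ) ^ p) * (ENNReal.ofReal p * GY) := by
          rw [ENNReal.ofReal_mul hε0.le]; ring
      _ = ENNReal.ofReal (ε * β ^ p) * IX + ENNReal.ofReal ((β / δ) ^ p) * IY := by
          rw [← hIXle, ← hIY]
  -- absorb the IX term
  have hεβ : ε * β ^ p ≤ 1 / 2 := by
    have hb : (0:ℝ) < β ^ p := Real.rpow_pos_of_pos hβ0 p
    have h2 := mul_le_mul_of_nonneg_right hε.le hb.le
    rwa [mul_assoc, ← Real.rpow_add hβ0, neg_add_cancel, Real.rpow_zero, mul_one] at h2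
  have hhalf : ENNReal.ofReal (1 / 2 : ℝ) = 1 / 2 := by
    rw [ENNReal.ofReal_div_of_pos two_pos, ENNReal.ofReal_one, ENNReal.ofReal_ofNat]
  have step : IX ≤ IX / 2 + ENNReal.ofReal ((β / δ) ^ p) * IY := by
    refine main.trans (add_le_add_left ?_ _)
    calc ENNReal.ofReal (ε * β ^ p) * IX ≤ ENNReal.ofReal (1 / 2 : ℝ) * IX :=
          mul_le_mul_left (ENNReal.ofReal_le_ofReal hεβ) _
      _ = IX / 2 := by rw [hhalf]; rw [ENNReal.div_eq_inv_mul, ENNReal.div_eq_inv_mul, mul_one]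
  have h4 : IX - IX / 2 ≤ ENNReal.ofReal ((β / δ) ^ p) * IY := by
    rw [tsub_le_iff_right]
    rw [add_comm] at step
    exact step
  rw [ENNReal.sub_half hIXfin] at h4
  have hIXeq : IX = 2 * (IX / 2) :=
    (ENNReal.mul_div_cancel two_ne_zero ENNReal.ofNat_ne_top).symm
  calc IX = 2 * (IX / 2) := hIXeq
    _ ≤ 2 * (ENNReal.ofReal ((β / δ) ^ p) * IY) := mul_le_mul_right h4 _
    _ = ENNReal.ofReal (2 * β ^ p / δ ^ p) * IY := by
        rw [← mul_assoc]
        congr 1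
        rw [Real.div_rpow hβ0.le hδ0.le, mul_div_assoc,
          ENNReal.ofReal_mul (by norm_num : (0:ℝ) ≤ 2), ENNReal.ofReal_ofNat]
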